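/- Let v, vᵢ, vⱼ, v_{ij} : ℝ → ℝ be differentiable functions with vᵢ(t) ≠ vⱼ(t) for all t. Set aⁱ := vᵢ − v, aʲ := vⱼ − v, aⁱⱼ := v_{ij} − vⱼ, aʲᵢ := v_{ij} − vᵢ. Then the pair of equations aʲᵢ − aʲ = aⁱⱼ − aⁱ and (aⁱ)' − (aʲ)' = aⁱ·aʲᵢ − aʲ·aⁱⱼ holds identically if and only if v_{ij} = vᵢ + vⱼ − v + (vᵢ' − vⱼ')/(vᵢ − vⱼ) identically on ℝ. -/

import Mathlib

/-- In the potential variables `aⁱ = vᵢ − v`, `aⁱⱼ = v_{ij} − vⱼ`, the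
compatibility equations of the monic factorization hold identically iff `v_{ij}` is
given by the map (TTv'). -/
theorem monic_aa_in_potential_variables
    (v vi vj vij : ℝ → ℝ)
    (hv : Differentiable ℝ v) (hvi : Differentiable ℝ vi)
    (hvj : Differentiable ℝ vj) (hvij : Differentiable ℝ vij)
    (hne : ∀ t, vi t ≠ vj t)
    (ai aj aij aji : ℝ → ℝ)
    (hai : ∀ t, ai t = vi t - v t) (haj : ∀ t, aj t = vj t - v t)
    (haij : ∀ t, aij t = vij t - vj t) (haji : ∀ t, aji t = vij t - vi t) :
    ((∀ t, aji t - aj t = aij t - ai t) ∧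
     (∀ t, deriv ai t - deriv aj t = ai t * aji t - aj t * aij t))
    ↔ (∀ t, vij t = vi t + vj t - v t
        + (deriv vi t - deriv vj t) / (vi t - vj t)) := by
  have eai : ai = fun t => vi t - v t := funext hai
  have eaj : aj = fun t => vj t - v t := funext haj
  have hd : ∀ t, deriv ai t - deriv aj t = deriv vi t - deriv vj t := by
    intro t
    rw [eai, eaj, deriv_fun_sub (hvi t) (hv t), deriv_fun_sub (hvj t) (hv t)]
    ring
  have hsub : ∀ t, vi t - vj t ≠ 0 := fun t => sub_ne_zero.mpr (hne t)
  constructor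
  · rintro ⟨_, h2⟩ t
    have h := h2 t
    rw [hd t, hai, haj, haij, haji] at h
    field_simp [hsub t]
    nlinarith [h, hsub t]
  · intro h
    constructor
    · intro t
      rw [hai, haj, haij, haji]; ring
    · intro t
      rw [hd t, hai, haj, haij, haji, h t]
      field_simp [hsub t]
      ring
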